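/- arXiv:1803.05248 — 5 statements merged into one kernel-verified Lean document; each statement's English description precedes it below -/
import Mathlib

section
/- Let V_d denote the set of vectors v = (v_d, …, v_0) of real polynomials with v_j = (1/j!)x^j + u_j and deg u_j ≤ j−1 (so v_0 = 1). Then a vector of polynomials v = (v_d, …, v_0) with v_0 = 1 belongs to V_d if and only if there exists a generalized complete Taylor operator T̃_d (an upper triangular (d+1)×(d+1) operator matrix with Δ on the diagonal, −1 on the superdiagonal, and real constants above the superdiagonal) such that T̃_d v = 0. -/
open Polynomial

/-- The falling factorial polynomial `(x)_j = x(x-1)⋯(x-j+1)`. -/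
noncomputable def fall (j : ℕ) : Polynomial ℝ :=
  ∏ k ∈ Finset.range j, (X - C (k : ℝ))

/-- The normalized falling factorial `[x]_j = (x)_j / j!`. -/
noncomputable def nfall (j : ℕ) : Polynomial ℝ :=
  ((j.factorial : ℝ))⁻¹ • fall j

/-- The forward difference operator `Δp(x) = p(x+1) - p(x)`. -/
noncomputable def fdiff (p : Polynomial ℝ) : Polynomial ℝ :=
  p.comp (X + 1) - p

/-- Action of a generalized complete Taylor operator with constant coefficients `s`
on a vector of polynomials `v`, indexed by degree: the component of degree `j` is
`Δ(v j) + ∑_{k<j} s j k • v k`.  (In the matrix picture, the constants `s j k`, `k < j`,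
are the strictly upper triangular entries of the operator written for the reversed
vector `[v_d, …, v_0]`; `s j (j-1) = -1` corresponds to the `-1` superdiagonal.) -/
noncomputable def tApply (s : ℕ → ℕ → ℝ) (v : ℕ → Polynomial ℝ) (j : ℕ) : Polynomial ℝ :=
  fdiff (v j) + ∑ k ∈ Finset.range j, C (s j k) * v k

/-- `s` encodes a generalized complete Taylor operator of order `d`:
only the entries `s j k` with `k < j ≤ d` may be nonzero, and the entries
corresponding to the superdiagonal (in the reversed ordering) equal `-1`. -/
def IsTaylorOp (d : ℕ) (s : ℕ → ℕ → ℝ) : Prop :=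
  (∀ j k, j ≤ k ∨ d < j → s j k = 0) ∧ ∀ j < d, s (j + 1) j = -1

/-- Membership in `V_d`: `v = (v_d, …, v_0)` with `v_j = [·]_j + u_j`, `deg u_j ≤ j - 1`
(so in particular `v_0 = 1`). -/
def MemV (d : ℕ) (v : ℕ → Polynomial ℝ) : Prop :=
  ∀ j ≤ d, (v j - nfall j).degree < (j : WithBot ℕ)

/-- `s` annihilates the polynomial vector `v` up to order `d`: `T̃ v = 0`. -/
def Annihilates (d : ℕ) (s : ℕ → ℕ → ℝ) (v : ℕ → Polynomial ℝ) : Prop :=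
  ∀ j ≤ d, tApply s v j = 0

/-- `V = (v_0, …, v_d)` (with `V j k` the degree-`k` component of `v_j`) is a chain of
length `d+1`: each `v_j ∈ V_j` and the compatibility condition holds, i.e. applying the
annihilator `T̃(v_j)` of `v_j` to the shifted vector `(v_{j+1,j+1}, …, v_{j+1,1})`
yields a vector of constant polynomials. -/
def IsPolyChain (d : ℕ) (V : ℕ → ℕ → Polynomial ℝ) : Prop :=
  (∀ j ≤ d, MemV j (V j)) ∧
    ∀ j < d, ∀ s : ℕ → ℕ → ℝ, IsTaylorOp j s → Annihilates j s (V j) →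
      ∀ i ≤ j, ∃ c : ℝ, tApply s (fun k => V (j + 1) (k + 1)) i = C c

lemma wb_lt_succ_iff {x : WithBot ℕ} {n : ℕ} : x < ((n+1 : ℕ) : WithBot ℕ) ↔ x ≤ (n : WithBot ℕ) := by
  rw [Nat.cast_withBot, Nat.cast_withBot]
  cases x with
  | bot => simp only [bot_le, iff_true]
           exact WithBot.bot_lt_coe _
  | coe m => rw [WithBot.coe_lt_coe, WithBot.coe_le_coe]; exact Nat.lt_succ_iff

lemma fdiff_add (p q : Polynomial ℝ) : fdiff (p + q) = fdiff p + fdiff q := by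
  simp only [fdiff, add_comp]; ring

lemma fdiff_sub (p q : Polynomial ℝ) : fdiff (p - q) = fdiff p - fdiff q := by
  simp only [fdiff, sub_comp]; ring

lemma fdiff_C_mul (a : ℝ) (p : Polynomial ℝ) : fdiff (C a * p) = C a * fdiff p := by
  simp only [fdiff, mul_comp, C_comp]; ring

lemma fdiff_smul (a : ℝ) (p : Polynomial ℝ) : fdiff (a • p) = a • fdiff p := by
  simp only [smul_eq_C_mul, fdiff_C_mul]

lemma fdiff_one : fdiff (1 : Polynomial ℝ) = 0 := by simp [fdiff]

lemma fall_monic (j : ℕ) : (fall j).Monic :=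
  monic_prod_of_monic _ _ fun k _ => monic_X_sub_C _

lemma fall_degree (j : ℕ) : (fall j).degree = j := by
  rw [fall, degree_prod]
  simp only [degree_X_sub_C, Finset.sum_const, Finset.card_range, nsmul_eq_mul, mul_one]

lemma nfall_degree_le (j : ℕ) : (nfall j).degree ≤ (j : WithBot ℕ) := by
  rw [nfall]
  exact le_trans (degree_smul_le _ _) (le_of_eq (fall_degree j))

lemma nfall_coeff_self (j : ℕ) : (nfall j).coeff j = ((j.factorial : ℝ))⁻¹ := by
  have h1 : (fall j).coeff j = 1 := by
    have := (fall_monic j).leadingCoeff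
    rwa [leadingCoeff, natDegree_eq_of_degree_eq_some (fall_degree j)] at this
  simp [nfall, h1]

lemma fall_succ (j : ℕ) : fall (j+1) = fall j * (X - C (j : ℝ)) :=
  Finset.prod_range_succ _ _

lemma fall_succ_comp (j : ℕ) : (fall (j+1)).comp (X + 1) = fall j * (X + 1) := by
  rw [fall, prod_comp]
  have h : ∀ k : ℕ, (X - C (k : ℝ)).comp (X + 1) = X + 1 - C (k : ℝ) := by
    intro k; simp [sub_comp]
  simp_rw [h]
  rw [Finset.prod_range_succ']
  have h2 : ∀ k : ℕ, X + 1 - C ((k+1 : ℕ) : ℝ) = X - C (k : ℝ) := by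
    intro k; push_cast [C_add, C_1]; ring
  simp_rw [h2]
  simp [fall]

lemma fdiff_fall_succ (j : ℕ) : fdiff (fall (j+1)) = C ((j : ℝ) + 1) * fall j := by
  rw [fdiff, fall_succ_comp, fall_succ, C_add, C_1]
  ring

lemma fdiff_nfall_succ (j : ℕ) : fdiff (nfall (j+1)) = nfall j := by
  rw [nfall, fdiff_smul, fdiff_fall_succ, nfall, smul_eq_C_mul, smul_eq_C_mul, ← mul_assoc, ← C_mul]
  congr 2
  rw [Nat.factorial_succ]
  have h1 : (j.factorial : ℝ) ≠ 0 := Nat.cast_ne_zero.mpr j.factorial_ne_zero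
  have h2 : ((j : ℝ) + 1) ≠ 0 := by positivity
  push_cast
  field_simp

lemma X1_natDegree : (X + 1 : Polynomial ℝ).natDegree = 1 := by
  rw [← C_1, natDegree_X_add_C]

lemma comp_X_add_one_ne_zero {p : Polynomial ℝ} (hp : p ≠ 0) : p.comp (X + 1) ≠ 0 := by
  intro h
  apply hp
  have := congrArg (fun q => Polynomial.comp q (X - 1)) h
  simpa [comp_assoc] using this

lemma degree_comp_X_add_one (p : Polynomial ℝ) : (p.comp (X + 1)).degree = p.degree := by
  rcases eq_or_ne p 0 with rfl | hp
  · simp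
  · rw [degree_eq_natDegree (comp_X_add_one_ne_zero hp), degree_eq_natDegree hp, natDegree_comp,
      X1_natDegree, mul_one]

lemma leadingCoeff_comp_X_add_one (p : Polynomial ℝ) :
    (p.comp (X + 1)).leadingCoeff = p.leadingCoeff := by
  rcases eq_or_ne p 0 with rfl | hp
  · simp
  · rw [leadingCoeff_comp (by rw [X1_natDegree]; exact one_ne_zero)]
    have : (X + 1 : Polynomial ℝ).leadingCoeff = 1 := by
      rw [← C_1]; exact (monic_X_add_C 1).leadingCoeff
    simp [this]

lemma degree_fdiff_lt {p : Polynomial ℝ} (hp : p ≠ 0) : (fdiff p).degree < p.degree := by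
  rw [fdiff]
  have h := degree_sub_lt (degree_comp_X_add_one p) (comp_X_add_one_ne_zero hp)
    (leadingCoeff_comp_X_add_one p)
  rwa [degree_comp_X_add_one] at h

lemma degree_fdiff_lt' {p : Polynomial ℝ} {n : ℕ} (h : p.degree ≤ (n : WithBot ℕ)) :
    (fdiff p).degree < (n : WithBot ℕ) := by
  rcases eq_or_ne p 0 with rfl | hp
  · show (fdiff 0).degree < _
    simp only [fdiff, zero_comp, sub_zero, degree_zero]
    rw [Nat.cast_withBot]; exact WithBot.bot_lt_coe n
  · exact lt_of_lt_of_le (degree_fdiff_lt hp) h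

lemma X1_monic : (X + 1 : Polynomial ℝ).Monic := by
  rw [← C_1]; exact monic_X_add_C 1

lemma degree_fdiff_X_pow (n : ℕ) : (fdiff (X^(n+1) : Polynomial ℝ)).degree = (n : WithBot ℕ) := by
  have h1 : fdiff (X^(n+1) : Polynomial ℝ) = (X+1)^(n+1) - X^(n+1) := by
    simp [fdiff]
  have hm : ((X+1)^(n+1) : Polynomial ℝ).Monic := X1_monic.pow _
  have hd1 : ((X+1)^(n+1) : Polynomial ℝ).degree = ((n+1 : ℕ) : WithBot ℕ) := by
    rw [degree_eq_natDegree hm.ne_zero, natDegree_pow, X1_natDegree, mul_one]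
  have hlt : ((X+1)^(n+1) - X^(n+1) : Polynomial ℝ).degree < ((n+1 : ℕ) : WithBot ℕ) := by
    have h := degree_sub_lt (hd1.trans (degree_X_pow (n+1)).symm) hm.ne_zero
      (by rw [hm.leadingCoeff, (monic_X_pow (n+1)).leadingCoeff])
    rwa [hd1] at h
  have hle : ((X+1)^(n+1) - X^(n+1) : Polynomial ℝ).degree ≤ (n : WithBot ℕ) :=
    wb_lt_succ_iff.mp hlt
  have hc : ((X+1)^(n+1) - X^(n+1) : Polynomial ℝ).coeff n = ((n : ℝ) + 1) := by
    rw [coeff_sub, coeff_X_add_one_pow, coeff_X_pow, if_neg (by omega)]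
    rw [Nat.choose_succ_self_right]
    push_cast; ring
  have hge : (n : WithBot ℕ) ≤ ((X+1)^(n+1) - X^(n+1) : Polynomial ℝ).degree :=
    le_degree_of_ne_zero (by rw [hc]; positivity)
  rw [h1]
  exact le_antisymm hle hge

lemma degree_fdiff_eq {p : Polynomial ℝ} {m : ℕ} (hp : p.natDegree = m + 1) :
    (fdiff p).degree = (m : WithBot ℕ) := by
  have hp0 : p ≠ 0 := fun h => by simp [h] at hp
  have h1 : fdiff p = fdiff p.eraseLead + C p.leadingCoeff * fdiff (X^(m+1)) := by
    conv_lhs => rw [← p.eraseLead_add_C_mul_X_pow, hp]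
    rw [fdiff_add, fdiff_C_mul]
  have hC : (C p.leadingCoeff * fdiff (X^(m+1))).degree = (m : WithBot ℕ) := by
    rw [degree_C_mul (leadingCoeff_ne_zero.mpr hp0), degree_fdiff_X_pow]
  have hEle : p.eraseLead.degree ≤ (m : WithBot ℕ) := by
    apply wb_lt_succ_iff.mp
    calc p.eraseLead.degree < p.degree := degree_eraseLead_lt hp0
    _ = ((m+1 : ℕ) : WithBot ℕ) := by rw [degree_eq_natDegree hp0, hp]
  have hE : (fdiff p.eraseLead).degree < (m : WithBot ℕ) := degree_fdiff_lt' hEle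
  rw [h1, add_comm, degree_add_eq_left_of_degree_lt (by rw [hC]; exact hE), hC]

lemma degree_lt_of_fdiff {p : Polynomial ℝ} {n : ℕ} (h : (fdiff p).degree < (n : WithBot ℕ)) :
    p.degree < ((n+1 : ℕ) : WithBot ℕ) := by
  by_contra hc
  push_neg at hc
  have hp0 : p ≠ 0 := by
    intro h0
    rw [h0, degree_zero] at hc
    exact absurd hc (by simp)
  have hnd : n + 1 ≤ p.natDegree := by
    rw [degree_eq_natDegree hp0, Nat.cast_withBot, Nat.cast_withBot, WithBot.coe_le_coe] at hc
    exact hc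
  obtain ⟨m, hm⟩ : ∃ m, p.natDegree = m + 1 := ⟨p.natDegree - 1, by omega⟩
  rw [degree_fdiff_eq hm] at h
  have hnm : n ≤ m := by omega
  exact absurd h (not_lt.mpr (by rw [Nat.cast_withBot, Nat.cast_withBot, WithBot.coe_le_coe]; exact hnm))

lemma degree_of_memV {p : Polynomial ℝ} {k : ℕ} (h : (p - nfall k).degree < (k : WithBot ℕ)) :
    p.degree ≤ (k : WithBot ℕ) := by
  have heq : p = nfall k + (p - nfall k) := by ring
  calc p.degree = (nfall k + (p - nfall k)).degree := by rw [← heq]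
  _ ≤ max (nfall k).degree (p - nfall k).degree := degree_add_le _ _
  _ ≤ (k : WithBot ℕ) := max_le (nfall_degree_le k) h.le

lemma degree_C_mul_le' (a : ℝ) (p : Polynomial ℝ) : (C a * p).degree ≤ p.degree := by
  calc (C a * p).degree ≤ (C a).degree + p.degree := degree_mul_le _ _
  _ ≤ 0 + p.degree := add_le_add degree_C_le le_rfl
  _ = p.degree := zero_add _

lemma exists_repr (v : ℕ → Polynomial ℝ) (n : ℕ)
    (hv : ∀ k, k < n → ((v k - nfall k).degree < (k : WithBot ℕ))) :
    ∀ p : Polynomial ℝ, p.degree < (n : WithBot ℕ) →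
      ∃ c : ℕ → ℝ, p = ∑ k ∈ Finset.range n, C (c k) * v k := by
  induction n with
  | zero =>
    intro p hp
    refine ⟨0, ?_⟩
    have h0 : p.degree = ⊥ := by
      rw [Nat.cast_zero] at hp
      exact Nat.WithBot.lt_zero_iff.mp hp
    simp [degree_eq_bot.mp h0]
  | succ n ih =>
    intro p hp
    have hvn := hv n (Nat.lt_succ_self n)
    have hvdeg : (v n).degree ≤ (n : WithBot ℕ) := degree_of_memV hvn
    have hcoeff : (v n).coeff n = ((n.factorial : ℝ))⁻¹ := by
      have h2 : (v n - nfall n).coeff n = 0 := coeff_eq_zero_of_degree_lt hvn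
      have h3 : (v n).coeff n = (v n - nfall n).coeff n + (nfall n).coeff n := by
        rw [coeff_sub]; ring
      rw [h3, h2, nfall_coeff_self]; ring
    set a : ℝ := p.coeff n * (n.factorial : ℝ) with ha
    have hq : (p - C a * v n).degree < (n : WithBot ℕ) := by
      rw [degree_lt_iff_coeff_zero]
      intro m hm
      rw [coeff_sub, coeff_C_mul]
      rcases eq_or_lt_of_le hm with rfl | hlt
      · rw [hcoeff, ha]
        have : (n.factorial : ℝ) ≠ 0 := Nat.cast_ne_zero.mpr n.factorial_ne_zero
        field_simp
        ring
      · have hpm : p.coeff m = 0 := coeff_eq_zero_of_degree_lt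
          (lt_of_lt_of_le hp (by rw [Nat.cast_withBot, Nat.cast_withBot, WithBot.coe_le_coe]; omega))
        have hvm : (v n).coeff m = 0 := coeff_eq_zero_of_degree_lt
          (lt_of_le_of_lt hvdeg (by rw [Nat.cast_withBot, Nat.cast_withBot, WithBot.coe_lt_coe]; omega))
        rw [hpm, hvm]; ring
    obtain ⟨c, hc⟩ := ih (fun k hk => hv k (by omega)) (p - C a * v n) hq
    refine ⟨Function.update c n a, ?_⟩
    rw [Finset.sum_range_succ]
    have hcong : ∀ k ∈ Finset.range n, C (Function.update c n a k) * v k = C (c k) * v k := by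
      intro k hk
      rw [Function.update_of_ne (Finset.mem_range.mp hk).ne]
    rw [Finset.sum_congr rfl hcong, ← hc, Function.update_self]
    ring

/-- A vector of polynomials `v` with `v 0 = 1` belongs to `V_d` if and only if there is a
generalized complete Taylor operator of order `d` annihilating it. -/
theorem memV_iff_exists_taylor (d : ℕ) (v : ℕ → Polynomial ℝ) (hv0 : v 0 = 1) :
    MemV d v ↔ ∃ s : ℕ → ℕ → ℝ, IsTaylorOp d s ∧ Annihilates d s v := by
  classical
  constructor
  · intro hmem
    have key : ∀ i : ℕ, i < d → ∃ c : ℕ → ℝ,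
        fdiff (v (i+1)) - v i = ∑ k ∈ Finset.range i, C (c k) * v k := by
      intro i hi
      apply exists_repr v i (fun k hk => hmem k (by omega))
      have h1 : fdiff (v (i+1)) - v i = fdiff (v (i+1) - nfall (i+1)) + (nfall i - v i) := by
        rw [fdiff_sub, fdiff_nfall_succ]; ring
      rw [h1]
      have h2 : (fdiff (v (i+1) - nfall (i+1))).degree < (i : WithBot ℕ) :=
        degree_fdiff_lt' (wb_lt_succ_iff.mp (hmem (i+1) (by omega)))
      have h3 : (nfall i - v i).degree < (i : WithBot ℕ) := by
        rw [show nfall i - v i = -(v i - nfall i) by ring, degree_neg]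
        exact hmem i (by omega)
      exact lt_of_le_of_lt (degree_add_le _ _) (max_lt h2 h3)
    let c : ℕ → ℕ → ℝ := fun i => if h : i < d then Classical.choose (key i h) else 0
    have hc_eq : ∀ (i : ℕ) (h : i < d), c i = Classical.choose (key i h) := by
      intro i h; simp only [c]; rw [dif_pos h]
    refine ⟨fun j k => if 1 ≤ j ∧ j ≤ d ∧ k < j then
        (if k = j - 1 then (-1 : ℝ) else -(c (j-1) k)) else 0, ⟨?_, ?_⟩, ?_⟩
    · intro j k hjk
      dsimp only
      rw [if_neg]
      rintro ⟨h1, h2, h3⟩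
      rcases hjk with h | h <;> omega
    · intro j hj
      dsimp only
      rw [if_pos ⟨by omega, by omega, by omega⟩, if_pos (by omega)]
    · intro j hj
      dsimp only [tApply]
      match j with
      | 0 =>
        rw [hv0, fdiff_one]
        simp
      | (i+1) =>
        have hid : i < d := by omega
        have hcspec := Classical.choose_spec (key i hid)
        rw [Finset.sum_range_succ]
        have hsi : (if 1 ≤ i+1 ∧ i+1 ≤ d ∧ i < i+1 then
            (if i = (i+1) - 1 then (-1 : ℝ) else -(c ((i+1)-1) i)) else 0) = -1 := by
          rw [if_pos ⟨by omega, by omega, by omega⟩, if_pos (by omega)]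
        rw [hsi]
        have hsk : ∀ k ∈ Finset.range i,
            C (if 1 ≤ i+1 ∧ i+1 ≤ d ∧ k < i+1 then
              (if k = (i+1) - 1 then (-1 : ℝ) else -(c ((i+1)-1) k)) else 0) * v k
              = -(C (Classical.choose (key i hid) k) * v k) := by
          intro k hk
          have hk' := Finset.mem_range.mp hk
          rw [if_pos ⟨by omega, by omega, by omega⟩, if_neg (by omega)]
          have : ((i+1) - 1) = i := by omega
          rw [this, hc_eq i hid, map_neg]
          ring
        rw [Finset.sum_congr rfl hsk, Finset.sum_neg_distrib, ← hcspec]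
        rw [map_neg, C_1]
        ring
  · rintro ⟨s, ⟨hs1, hs2⟩, hA⟩
    intro j
    induction j using Nat.strong_induction_on with
    | _ j ih =>
      intro hj
      match j with
      | 0 =>
        have h0 : v 0 - nfall 0 = 0 := by rw [hv0]; simp [nfall, fall]
        rw [h0, degree_zero, Nat.cast_zero]
        exact Nat.WithBot.lt_zero_iff.mpr rfl
      | (i+1) =>
        have hA1 := hA (i+1) hj
        rw [tApply, Finset.sum_range_succ, hs2 i (by omega)] at hA1
        have hfd : fdiff (v (i+1)) = v i - ∑ k ∈ Finset.range i, C (s (i+1) k) * v k := by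
          rw [map_neg, C_1] at hA1
          linear_combination hA1
        have hw : fdiff (v (i+1) - nfall (i+1)) =
            (v i - nfall i) - ∑ k ∈ Finset.range i, C (s (i+1) k) * v k := by
          rw [fdiff_sub, fdiff_nfall_succ, hfd]; ring
        have hdegsum : (∑ k ∈ Finset.range i, C (s (i+1) k) * v k).degree < (i : WithBot ℕ) := by
          apply lt_of_le_of_lt (degree_sum_le _ _)
          rw [Finset.sup_lt_iff (by rw [Nat.cast_withBot]; exact WithBot.bot_lt_coe i)]
          intro k hk
          have hki := Finset.mem_range.mp hk
          have hvk : (v k).degree ≤ (k : WithBot ℕ) :=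
            degree_of_memV (ih k (by omega) (by omega))
          calc (C (s (i+1) k) * v k).degree ≤ (v k).degree := degree_C_mul_le' _ _
          _ ≤ (k : WithBot ℕ) := hvk
          _ < (i : WithBot ℕ) := by
            rw [Nat.cast_withBot, Nat.cast_withBot, WithBot.coe_lt_coe]; exact hki
        have hfdlt : (fdiff (v (i+1) - nfall (i+1))).degree < (i : WithBot ℕ) := by
          rw [hw]
          exact lt_of_le_of_lt (degree_sub_le _ _)
            (max_lt (ih i (by omega) (by omega)) hdegsum)
        exact degree_lt_of_fdiff hfdlt
end

section
/- For each vector v ∈ V_d there exists a unique generalized complete Taylor operator T̃ such that T̃ v = 0 (the annihilator of v). -/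
open Polynomial

lemma fall_natDegree (j : ℕ) : (fall j).natDegree = j := by
  rw [fall, natDegree_prod _ _ fun k _ => X_sub_C_ne_zero _]
  simp only [natDegree_X_sub_C, Finset.sum_const, smul_eq_mul, mul_one, Finset.card_range]

lemma comp_coeff (p : Polynomial ℝ) (N m : ℕ) (hN : p.natDegree < N) :
    (p.comp (X + 1)).coeff m = ∑ i ∈ Finset.range N, p.coeff i * (i.choose m : ℝ) := by
  conv_lhs => rw [p.as_sum_range' N hN]
  rw [Polynomial.comp, eval₂_finset_sum, finset_sum_coeff]
  refine Finset.sum_congr rfl fun i _ => ?_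
  rw [eval₂_monomial, coeff_C_mul, coeff_X_add_one_pow]

lemma fdiff_coeff (p : Polynomial ℝ) (n : ℕ) (h : p.degree ≤ ((n + 1 : ℕ) : WithBot ℕ)) :
    (fdiff p).coeff n = (n + 1 : ℝ) * p.coeff (n + 1) := by
  have hnd : p.natDegree < n + 2 := by
    have := natDegree_le_iff_degree_le.2 h; omega
  rw [fdiff, coeff_sub, comp_coeff p (n + 2) n hnd]
  rw [Finset.sum_range_succ, Finset.sum_range_succ]
  rw [Finset.sum_eq_zero (fun i hi => by
    rw [Nat.choose_eq_zero_of_lt (Finset.mem_range.1 hi), Nat.cast_zero, mul_zero])]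
  simp [Nat.choose_succ_self_right]
  ring

lemma fdiff_degree_lt (p : Polynomial ℝ) (n : ℕ) (h : p.degree ≤ (n : WithBot ℕ)) :
    (fdiff p).degree < (n : WithBot ℕ) := by
  rcases eq_or_ne p 0 with rfl | hp
  · have : fdiff 0 = 0 := by simp [fdiff]
    rw [this, degree_zero]
    exact WithBot.bot_lt_coe n
  rcases eq_or_ne p.natDegree 0 with h0 | h0
  · have : p.comp (X + 1) = p := by
      rw [Polynomial.eq_C_of_natDegree_eq_zero h0]; simp
    rw [fdiff, this, sub_self, degree_zero]
    exact WithBot.bot_lt_coe n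
  · have h1 : (X + 1 : ℝ[X]) = X + C 1 := by simp
    have hc : (p.comp (X + 1)).leadingCoeff = p.leadingCoeff := by
      rw [leadingCoeff_comp (by rw [h1, natDegree_X_add_C]; omega), h1,
        leadingCoeff_X_add_C, one_pow, mul_one]
    have hcne : p.comp (X + 1) ≠ 0 := by
      intro hz
      rw [hz, leadingCoeff_zero] at hc
      exact hp (leadingCoeff_eq_zero.1 hc.symm)
    have hd : (p.comp (X + 1)).degree = p.degree := by
      rw [degree_eq_natDegree hcne, degree_eq_natDegree hp, natDegree_comp]
      rw [h1, natDegree_X_add_C, mul_one]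
    have := degree_sub_lt hd hcne hc
    rw [← fdiff, hd] at this
    exact lt_of_lt_of_le this h

/-- For each `v ∈ V_d` there is a unique generalized complete Taylor operator
annihilating `v` (the annihilator of `v`). -/
theorem taylor_annihilator_unique (d : ℕ) (v : ℕ → Polynomial ℝ) (hv : MemV d v) :
    ∃! s : ℕ → ℕ → ℝ, IsTaylorOp d s ∧ Annihilates d s v := by
  -- basic facts about v
  have hfac : ∀ j : ℕ, ((j.factorial : ℝ)) ≠ 0 := fun j => by
    exact_mod_cast j.factorial_ne_zero
  have hdeg : ∀ j ≤ d, (v j).degree ≤ (j : WithBot ℕ) := by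
    intro j hj
    have : v j = (v j - nfall j) + nfall j := by ring
    rw [this]
    exact le_trans (degree_add_le _ _) (max_le (le_of_lt (hv j hj)) (nfall_degree_le j))
  have hcoef : ∀ j ≤ d, (v j).coeff j = ((j.factorial : ℝ))⁻¹ := by
    intro j hj
    have h0 : (v j - nfall j).coeff j = 0 := coeff_eq_zero_of_degree_lt (hv j hj)
    have := nfall_coeff_self j
    rw [coeff_sub, sub_eq_zero] at h0
    rw [h0, this]
  have hcoef0 : ∀ k ≤ d, ∀ m, k < m → (v k).coeff m = 0 := by
    intro k hk m hm
    refine coeff_eq_zero_of_degree_lt (lt_of_le_of_lt (hdeg k hk) ?_)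
    exact_mod_cast hm
  -- linear independence
  have li : ∀ n, n ≤ d + 1 → ∀ c : ℕ → ℝ,
      (∑ k ∈ Finset.range n, C (c k) * v k) = 0 → ∀ k < n, c k = 0 := by
    intro n
    induction n with
    | zero => intro _ c _ k hk; omega
    | succ n ih =>
      intro hn c hc k hk
      have hcn : c n = 0 := by
        have := congrArg (fun p => Polynomial.coeff p n) hc
        simp only [finset_sum_coeff, coeff_C_mul, coeff_zero] at this
        rw [Finset.sum_range_succ] at this
        rw [Finset.sum_eq_zero (fun i hi => by
          have hi' := Finset.mem_range.1 hi
          rw [hcoef0 i (by omega) n hi', mul_zero]), zero_add,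
          hcoef n (by omega)] at this
        have h2 : c n * (n.factorial : ℝ)⁻¹ ≠ 0 ∨ c n = 0 := by
          rcases eq_or_ne (c n) 0 with h | h
          · exact Or.inr h
          · exact Or.inl (mul_ne_zero h (inv_ne_zero (hfac n)))
        rcases h2 with h | h
        · exact absurd this h
        · exact h
      rcases Nat.lt_succ_iff_lt_or_eq.1 hk with hk' | rfl
      · refine ih (by omega) c ?_ k hk'
        rw [Finset.sum_range_succ, hcn] at hc
        simpa using hc
      · exact hcn
  -- existence of expansions
  have ex : ∀ n, n ≤ d + 1 → ∀ p : Polynomial ℝ, p.degree < (n : WithBot ℕ) →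
      ∃ c : ℕ → ℝ, p = ∑ k ∈ Finset.range n, C (c k) * v k := by
    intro n
    induction n with
    | zero =>
      intro _ p hp
      refine ⟨0, ?_⟩
      have hb : p.degree = ⊥ := Nat.WithBot.lt_zero_iff.1 (by exact_mod_cast hp)
      have : p = 0 := degree_eq_bot.1 hb
      simp [this]
    | succ n ih =>
      intro hn p hp
      set a : ℝ := p.coeff n * n.factorial with ha
      have hq : (p - C a * v n).degree < (n : WithBot ℕ) := by
        rw [degree_lt_iff_coeff_zero]
        intro m hm
        have hm' : (n : WithBot ℕ) ≤ (m : WithBot ℕ) := by exact_mod_cast hm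
        rw [coeff_sub, coeff_C_mul]
        rcases eq_or_lt_of_le hm with rfl | hlt
        · rw [hcoef n (by omega), ha]
          field_simp
          ring
        · rw [hcoef0 n (by omega) m hlt, mul_zero, sub_zero]
          refine coeff_eq_zero_of_degree_lt (lt_of_lt_of_le hp ?_)
          exact_mod_cast hlt
      obtain ⟨c, hc⟩ := ih (by omega) _ hq
      refine ⟨Function.update c n a, ?_⟩
      rw [Finset.sum_range_succ, Function.update_self]
      have : ∑ k ∈ Finset.range n, C (Function.update c n a k) * v k
          = ∑ k ∈ Finset.range n, C (c k) * v k := by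
        refine Finset.sum_congr rfl fun k hk => ?_
        rw [Function.update_of_ne (by exact Nat.ne_of_lt (Finset.mem_range.1 hk))]
      rw [this, ← hc]
      ring
  -- the annihilator
  have hfd : ∀ j ≤ d, (-(fdiff (v j))).degree < (j : WithBot ℕ) := by
    intro j hj
    rw [degree_neg]
    exact fdiff_degree_lt _ _ (hdeg j hj)
  choose cf hcf using fun (j : ℕ) (hj : j ≤ d) => ex j (by omega) _ (hfd j hj)
  set S : ℕ → ℕ → ℝ := fun j k => if h : j ≤ d ∧ k < j then cf j h.1 k else 0 with hS
  have hsum : ∀ j (hj : j ≤ d),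
      ∑ k ∈ Finset.range j, C (S j k) * v k = -(fdiff (v j)) := by
    intro j hj
    rw [hcf j hj]
    refine Finset.sum_congr rfl fun k hk => ?_
    rw [hS]
    simp only [Finset.mem_range] at hk
    simp only
    rw [dif_pos ⟨hj, hk⟩]
  have hann : Annihilates d S v := by
    intro j hj
    rw [tApply, hsum j hj]
    ring
  have hop : IsTaylorOp d S := by
    constructor
    · intro j k h
      rw [hS]
      simp only
      rw [dif_neg (by omega)]
    · intro j hj
      -- compare coefficient j in the expansion of -(fdiff (v (j+1)))
      have hs := hsum (j + 1) (by omega)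
      have hco := congrArg (fun p => Polynomial.coeff p j) hs
      simp only [finset_sum_coeff, coeff_C_mul, coeff_neg] at hco
      rw [Finset.sum_range_succ] at hco
      rw [Finset.sum_eq_zero (fun i hi => by
        have hi' := Finset.mem_range.1 hi
        rw [hcoef0 i (by omega) j hi', mul_zero]), zero_add,
        hcoef j (by omega)] at hco
      rw [fdiff_coeff _ j (hdeg (j + 1) (by omega)), hcoef (j + 1) (by omega)] at hco
      have hfe : ((j + 1).factorial : ℝ) = (j + 1 : ℝ) * (j.factorial : ℝ) := by
        rw [Nat.factorial_succ]; push_cast; ring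
      have hj1 : (j + 1 : ℝ) ≠ 0 := by positivity
      have : S (j + 1) j * (j.factorial : ℝ)⁻¹ = -1 * (j.factorial : ℝ)⁻¹ := by
        rw [hco, hfe]
        field_simp
      exact mul_right_cancel₀ (inv_ne_zero (hfac j)) this
  refine ⟨S, ⟨hop, hann⟩, ?_⟩
  -- uniqueness
  rintro s' ⟨hop', hann'⟩
  funext j k
  by_cases hjk : k < j ∧ j ≤ d
  · obtain ⟨hk, hj⟩ := hjk
    have h1 : ∑ i ∈ Finset.range j, C (s' j i) * v i = -(fdiff (v j)) := by
      have := hann' j hj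
      rw [tApply] at this
      linear_combination this - fdiff (v j)
    have h2 := hsum j hj
    have h3 : ∑ i ∈ Finset.range j, C (s' j i - S j i) * v i = 0 := by
      have : ∑ i ∈ Finset.range j, C (s' j i - S j i) * v i
          = (∑ i ∈ Finset.range j, C (s' j i) * v i)
            - ∑ i ∈ Finset.range j, C (S j i) * v i := by
        rw [← Finset.sum_sub_distrib]
        refine Finset.sum_congr rfl fun i _ => by rw [C_sub]; ring
      rw [this, h1, h2, sub_self]
    have := li j (by omega) _ h3 k hk
    linarith [this]
  · have h1 : s' j k = 0 := hop'.1 j k (by omega)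
    have h2 : S j k = 0 := hop.1 j k (by omega)
    rw [h1, h2]
end

section
/- If V = (v_0, …, v_d) is a chain, then the annihilators nest: T̃(v_{j+1}) equals the block matrix with T̃(v_j) in the top-left, −w_{j+1} in the top-right column, and Δ in the bottom-right corner, where w_{j+1} = T̃(v_j)[v_{j+1,j+1}, …, v_{j+1,1}]^T. -/
open Polynomial

lemma nfall_degree (j : ℕ) : (nfall j).degree = j := by
  rw [nfall, smul_eq_C_mul, degree_C_mul (by positivity : ((j.factorial:ℝ))⁻¹ ≠ 0), fall_degree]

lemma nfall_zero : nfall 0 = 1 := by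
  simp [nfall, fall]

lemma memV_degree {m : ℕ} {v : ℕ → Polynomial ℝ} (hv : MemV m v) {k : ℕ} (hk : k ≤ m) :
    (v k).degree = k := by
  have h := hv k hk
  rw [← nfall_degree k] at h
  have := degree_add_eq_right_of_degree_lt h
  rwa [sub_add_cancel, nfall_degree] at this

lemma memV_zero {m : ℕ} {v : ℕ → Polynomial ℝ} (hv : MemV m v) : v 0 = 1 := by
  have h := hv 0 (Nat.zero_le m)
  rw [Nat.cast_zero, Nat.WithBot.lt_zero_iff, degree_eq_bot, sub_eq_zero] at h
  rw [h, nfall_zero]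

lemma indep_aux (p : ℕ → Polynomial ℝ) :
    ∀ (a : ℕ) (t : ℕ → ℝ), (∀ b < a, (p b).degree = ((b + 1 : ℕ) : WithBot ℕ)) →
      (∑ b ∈ Finset.range a, C (t b) * p b).degree < 1 → ∀ b < a, t b = 0 := by
  intro a
  induction a with
  | zero => intro t _ _ b hb; omega
  | succ n ih =>
    intro t hp h
    have htn : t n = 0 := by
      by_contra hne
      rw [Finset.sum_range_succ] at h
      have hdn : (C (t n) * p n).degree = ((n + 1 : ℕ) : WithBot ℕ) := by
        rw [degree_C_mul hne, hp n (Nat.lt_succ_self n)]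
      have hrest : (∑ b ∈ Finset.range n, C (t b) * p b).degree < (C (t n) * p n).degree := by
        rw [hdn]
        refine lt_of_le_of_lt (degree_sum_le _ _) ?_
        rw [Finset.sup_lt_iff (by exact_mod_cast WithBot.bot_lt_coe (n+1))]
        intro b hb
        rw [← smul_eq_C_mul]
        refine lt_of_le_of_lt (degree_smul_le _ _) ?_
        rw [hp b (by simpa using Nat.lt_succ_of_lt (Finset.mem_range.mp hb))]
        exact_mod_cast Nat.succ_lt_succ (Finset.mem_range.mp hb)
      rw [degree_add_eq_right_of_degree_lt hrest, hdn] at h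
      have : (n + 1 : ℕ) < 1 := by exact_mod_cast h
      omega
    intro b hb
    rcases Nat.lt_succ_iff_lt_or_eq.mp hb with hb' | rfl
    · refine ih t (fun b hb => hp b (Nat.lt_succ_of_lt hb)) ?_ b hb'
      rw [Finset.sum_range_succ, htn] at h
      simpa using h
    · exact htn

/-- Nesting of annihilators in a chain: if `s` is the annihilator of `v_j` and `s'` that of
`v_{j+1}`, then `T̃(v_{j+1})` is the block matrix with `T̃(v_j)` in the top-left (i.e.
`s' (a+1) (b+1) = s a b`), the column `-w_{j+1}` in the top-right (i.e. the constants
`-(s' (i+1) 0)` are the entries of `w_{j+1} = T̃(v_j)(v_{j+1,j+1}, …, v_{j+1,1})ᵀ`),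
and `Δ` in the bottom-right corner. -/
theorem chain_annihilator_nesting (d : ℕ) (V : ℕ → ℕ → Polynomial ℝ) (hV : IsPolyChain d V)
    (j : ℕ) (hj : j < d) (s s' : ℕ → ℕ → ℝ)
    (hs : IsTaylorOp j s) (hann : Annihilates j s (V j))
    (hs' : IsTaylorOp (j + 1) s') (hann' : Annihilates (j + 1) s' (V (j + 1))) :
    (∀ a b : ℕ, s' (a + 1) (b + 1) = s a b) ∧
      ∀ i ≤ j, tApply s (fun k => V (j + 1) (k + 1)) i = C (-(s' (i + 1) 0)) := by
  have hVj1 : MemV (j + 1) (V (j + 1)) := hV.1 (j + 1) hj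
  have hzero : V (j + 1) 0 = 1 := memV_zero hVj1
  have key : ∀ a ≤ j, (∀ b < a, s' (a + 1) (b + 1) = s a b) ∧
      tApply s (fun k => V (j + 1) (k + 1)) a = C (-(s' (a + 1) 0)) := by
    intro a ha
    obtain ⟨c, hc⟩ := hV.2 j hj s hs hann a ha
    have E1 : tApply s' (V (j + 1)) (a + 1) = 0 := hann' (a + 1) (by omega)
    rw [tApply, Finset.sum_range_succ', hzero, mul_one] at E1
    rw [tApply] at hc
    have heq : (∑ k ∈ Finset.range a,
        C (s a k - s' (a + 1) (k + 1)) * V (j + 1) (k + 1)) = C (c + s' (a + 1) 0) := by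
      have expand : ∀ k ∈ Finset.range a,
          C (s a k - s' (a + 1) (k + 1)) * V (j + 1) (k + 1)
            = C (s a k) * V (j + 1) (k + 1) - C (s' (a + 1) (k + 1)) * V (j + 1) (k + 1) := by
        intro k _
        rw [C_sub, sub_mul]
      rw [Finset.sum_congr rfl expand, Finset.sum_sub_distrib, C_add]
      have h1 : (∑ k ∈ Finset.range a, C (s a k) * V (j + 1) (k + 1))
          = C c - fdiff (V (j + 1) (a + 1)) := by
        linear_combination hc
      have h2 : (∑ k ∈ Finset.range a, C (s' (a + 1) (k + 1)) * V (j + 1) (k + 1))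
          = -fdiff (V (j + 1) (a + 1)) - C (s' (a + 1) 0) := by
        linear_combination E1
      rw [h1, h2]; ring
    have hdegC : (∑ k ∈ Finset.range a,
        C (s a k - s' (a + 1) (k + 1)) * V (j + 1) (k + 1)).degree < 1 := by
      rw [heq]
      exact lt_of_le_of_lt degree_C_le (by norm_num)
    have hzero' : ∀ b < a, s a b - s' (a + 1) (b + 1) = 0 := by
      refine indep_aux (fun k => V (j + 1) (k + 1)) a
        (fun t => s a t - s' (a + 1) (t + 1)) (fun b hb => ?_) hdegC
      exact memV_degree hVj1 (by omega)
    constructor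
    · intro b hb
      have := hzero' b hb
      linarith
    · have hsum0 : (∑ k ∈ Finset.range a,
          C (s a k - s' (a + 1) (k + 1)) * V (j + 1) (k + 1)) = 0 := by
        apply Finset.sum_eq_zero
        intro k hk
        rw [hzero' k (Finset.mem_range.mp hk), C_0, zero_mul]
      rw [hsum0] at heq
      have h' : c + s' (a + 1) 0 = 0 := C_eq_zero.mp heq.symm
      have hc0 : c = -(s' (a + 1) 0) := by linarith
      simp only [tApply]
      rw [hc, hc0]
  refine ⟨fun a b => ?_, fun i hi => (key i hi).2⟩
  rcases le_or_gt a j with haj | haj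
  · rcases lt_or_ge b a with hba | hba
    · exact (key a haj).1 b hba
    · rw [hs.1 a b (Or.inl hba), hs'.1 (a + 1) (b + 1) (Or.inl (by omega))]
  · rw [hs.1 a b (Or.inr haj), hs'.1 (a + 1) (b + 1) (Or.inr (by omega))]
end

section
/- Let T̃*_d(z) be the (d+1)×(d+1) symbol matrix of a generalized complete Taylor operator: upper triangular with (z^{−1} − 1) on the diagonal, constants in the strict upper triangle, and superdiagonal entries −1. Then its inverse factorizes as (T̃*_d(z))^{−1} = (z^{−1} − 1)^{−1}·D*(z)·P*(z)·D*(z)^{−1}, where D*(z) = diag(1, z^{−1}−1, …, (z^{−1}−1)^d) and P*(z) is an upper triangular matrix of Laurent polynomials with p*_{jj}(z) = 1 and P*(1) equal to the upper triangular matrix of all ones. -/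
open LaurentPolynomial

/-- The Laurent polynomial `z⁻¹ - 1`, the symbol of the forward difference `Δ`. -/
noncomputable def tsym : LaurentPolynomial ℝ := T (-1) - 1

namespace TaylorAux

variable {d : ℕ}

/-- superdiagonal ones matrix -/
noncomputable def Emat (d : ℕ) : Matrix (Fin (d+1)) (Fin (d+1)) (LaurentPolynomial ℝ) :=
  Matrix.of fun j k => if (k : ℕ) = (j : ℕ) + 1 then 1 else 0

lemma Emat_pow (d p : ℕ) (j k : Fin (d+1)) :
    (Emat d ^ p) j k = if (k : ℕ) = (j : ℕ) + p then 1 else 0 := by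
  induction p generalizing k with
  | zero =>
    simp [Matrix.one_apply, Fin.ext_iff, eq_comm]
  | succ p ih =>
    rw [pow_succ, Matrix.mul_apply]
    by_cases hk : (k : ℕ) = (j : ℕ) + p + 1
    · have hjp : (j : ℕ) + p < d + 1 := by omega
      have hm : (⟨(j : ℕ) + p, hjp⟩ : Fin (d+1)) ∈ Finset.univ := Finset.mem_univ _
      rw [Finset.sum_eq_single (⟨(j : ℕ) + p, hjp⟩ : Fin (d+1))]
      · rw [ih]
        simp [Emat, hk, Nat.add_assoc]
      · intro m _ hm'
        rcases eq_or_ne ((m : ℕ)) ((j : ℕ) + p) with h | h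
        · exact absurd (Fin.ext h) hm'
        · simp [ih, h]
      · intro h; exact absurd hm h
    · have hk' : (k : ℕ) ≠ (j : ℕ) + (p + 1) := by omega
      rw [if_neg hk']
      apply Finset.sum_eq_zero
      intro m _
      rcases eq_or_ne ((m : ℕ)) ((j : ℕ) + p) with h | h
      · have : (k : ℕ) ≠ (m : ℕ) + 1 := by omega
        simp [Emat, this]
      · simp [ih, h]

/-- strictly-upper nilpotent part -/
noncomputable def Nmat (d : ℕ) (s : Fin (d+1) → Fin (d+1) → ℝ) :
    Matrix (Fin (d+1)) (Fin (d+1)) (LaurentPolynomial ℝ) :=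
  Matrix.of fun j k =>
    if (j : ℕ) < (k : ℕ) then LaurentPolynomial.C (s j k) * tsym ^ ((k : ℕ) - j - 1) else 0

lemma Nmat_pow_eq_zero (d : ℕ) (s : Fin (d+1) → Fin (d+1) → ℝ) (p : ℕ)
    (j k : Fin (d+1)) (h : (k : ℕ) < (j : ℕ) + p) : (Nmat d s ^ p) j k = 0 := by
  induction p generalizing j with
  | zero => exact Matrix.one_apply_ne (by intro e; subst e; omega)
  | succ p ih =>
    rw [pow_succ', Matrix.mul_apply]
    apply Finset.sum_eq_zero
    intro m _
    by_cases hm : (j : ℕ) < (m : ℕ)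
    · rw [ih m (by omega), mul_zero]
    · have : Nmat d s j m = 0 := by
        simp only [Nmat, Matrix.of_apply, if_neg hm]
      rw [this, zero_mul]

lemma Nmat_nilpotent (d : ℕ) (s : Fin (d+1) → Fin (d+1) → ℝ) :
    (Nmat d s) ^ (d + 1) = 0 := by
  ext j k
  rw [Nmat_pow_eq_zero d s (d+1) j k (by omega)]
  rfl

/-- decomposition of `-N` as superdiagonal ones plus a multiple of `tsym` -/
lemma neg_Nmat_decomp (d : ℕ) (s : Fin (d+1) → Fin (d+1) → ℝ)
    (hsup : ∀ j k : Fin (d + 1), (k : ℕ) = (j : ℕ) + 1 → s j k = -1) :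
    ∃ R : Matrix (Fin (d+1)) (Fin (d+1)) (LaurentPolynomial ℝ),
      -(Nmat d s) = Emat d + tsym • R := by
  refine ⟨Matrix.of fun j k =>
    if (j : ℕ) + 1 < (k : ℕ) then -(LaurentPolynomial.C (s j k) * tsym ^ ((k : ℕ) - j - 2))
    else 0, ?_⟩
  ext j k
  simp only [Matrix.neg_apply, Matrix.add_apply, Matrix.smul_apply, Nmat, Emat, Matrix.of_apply,
    smul_eq_mul]
  rcases lt_trichotomy ((j : ℕ) + 1) ((k : ℕ)) with h | h | h
  · have h1 : (j : ℕ) < (k : ℕ) := by omega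
    have h2 : ¬ (k : ℕ) = (j : ℕ) + 1 := by omega
    have h3 : (k : ℕ) - j - 1 = ((k : ℕ) - j - 2) + 1 := by omega
    rw [if_pos h1, if_neg h2, if_pos h, h3, pow_succ]
    ring
  · have h1 : (j : ℕ) < (k : ℕ) := by omega
    have h4 : (k : ℕ) - j - 1 = 0 := by omega
    rw [if_pos h1, if_pos h.symm, if_neg (by omega), h4, pow_zero, mul_one,
      hsup j k h.symm, mul_zero, add_zero, map_neg, map_one, neg_neg]
  · rw [if_neg (by omega), if_neg (by omega), if_neg (by omega), mul_zero, add_zero, neg_zero]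

/-- powers mod tsym -/
lemma pow_decomp (d : ℕ) (R A : Matrix (Fin (d+1)) (Fin (d+1)) (LaurentPolynomial ℝ)) (p : ℕ) :
    ∃ Q : Matrix (Fin (d+1)) (Fin (d+1)) (LaurentPolynomial ℝ),
      (A + tsym • R) ^ p = A ^ p + tsym • Q := by
  induction p with
  | zero => exact ⟨0, by simp⟩
  | succ p ih =>
    obtain ⟨Q, hQ⟩ := ih
    refine ⟨A ^ p * R + Q * A + tsym • (Q * R), ?_⟩
    rw [pow_succ, hQ]
    simp only [add_mul, mul_add, smul_mul_assoc, mul_smul_comm, smul_add, pow_succ]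
    abel

end TaylorAux


/-- Factorization of the inverse of the symbol of a generalized complete Taylor operator:
for `T̃*_d(z)` upper triangular with `z⁻¹ - 1` on the diagonal, `-1` on the superdiagonal
and constants above, we have `(T̃*_d(z))⁻¹ = (z⁻¹-1)⁻¹ D*(z) P*(z) D*(z)⁻¹` with
`D*(z) = diag(1, z⁻¹-1, …, (z⁻¹-1)^d)` and `P*(z)` upper triangular with Laurent
polynomial entries, `p*_{jj} = 1`, and `p*_{jk}(1) = 1` for `j ≤ k` (expressed as
`P j k = 1 + (z⁻¹-1)·q`).  The inverse identity is stated without inverses as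
`T̃*_d(z) · D*(z) · P*(z) = (z⁻¹-1) · D*(z)`. -/
theorem taylor_symbol_inverse (d : ℕ) (s : Fin (d + 1) → Fin (d + 1) → ℝ)
    (hsup : ∀ j k : Fin (d + 1), (k : ℕ) = (j : ℕ) + 1 → s j k = -1) :
    ∃ P : Matrix (Fin (d + 1)) (Fin (d + 1)) (LaurentPolynomial ℝ),
      (∀ j k : Fin (d + 1), k < j → P j k = 0) ∧
      (∀ j : Fin (d + 1), P j j = 1) ∧
      (∀ j k : Fin (d + 1), j ≤ k → ∃ q : LaurentPolynomial ℝ, P j k = 1 + tsym * q) ∧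
      (Matrix.of fun j k : Fin (d + 1) =>
          if j = k then tsym
          else if j < k then LaurentPolynomial.C (s j k) else 0)
        * Matrix.diagonal (fun j : Fin (d + 1) => tsym ^ (j : ℕ)) * P
        = tsym • Matrix.diagonal (fun j : Fin (d + 1) => tsym ^ (j : ℕ)) := by
  classical
  set N := TaylorAux.Nmat d s with hN
  set E := TaylorAux.Emat d with hE
  set D := Matrix.diagonal (fun j : Fin (d + 1) => tsym ^ (j : ℕ)) with hD
  set P : Matrix (Fin (d + 1)) (Fin (d + 1)) (LaurentPolynomial ℝ) :=
    ∑ i ∈ Finset.range (d + 1), (-N) ^ i with hP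
  have hnegpow : ∀ (p : ℕ) (j k : Fin (d + 1)), (k : ℕ) < (j : ℕ) + p → ((-N) ^ p) j k = 0 := by
    intro p j k h
    rcases Nat.even_or_odd p with hp | hp
    · rw [hp.neg_pow, TaylorAux.Nmat_pow_eq_zero d s p j k h]
    · rw [hp.neg_pow, Matrix.neg_apply, TaylorAux.Nmat_pow_eq_zero d s p j k h, neg_zero]
  refine ⟨P, ?_, ?_, ?_, ?_⟩
  · intro j k hkj
    rw [hP, Matrix.sum_apply]
    apply Finset.sum_eq_zero
    intro i _
    exact hnegpow i j k (by have := Fin.lt_def.mp hkj; omega)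
  · intro j
    rw [hP, Matrix.sum_apply]
    rw [Finset.sum_eq_single 0]
    · simp [Matrix.one_apply_eq]
    · intro i _ hi
      exact hnegpow i j j (by omega)
    · intro h; exact absurd (Finset.mem_range.mpr (by omega)) h
  · intro j k hjk
    have hjk' : (j : ℕ) ≤ (k : ℕ) := Fin.le_def.mp hjk
    obtain ⟨R, hR⟩ := TaylorAux.neg_Nmat_decomp d s hsup
    have hdec : ∀ i : ℕ, ∃ Q, (-N) ^ i = E ^ i + tsym • Q := by
      intro i
      rw [hR]
      exact TaylorAux.pow_decomp d R E i
    choose Q hQ using hdec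
    refine ⟨(∑ i ∈ Finset.range (d + 1), Q i) j k, ?_⟩
    have : P = (∑ i ∈ Finset.range (d + 1), E ^ i)
        + tsym • (∑ i ∈ Finset.range (d + 1), Q i) := by
      rw [hP, Finset.smul_sum, ← Finset.sum_add_distrib]
      exact Finset.sum_congr rfl fun i _ => hQ i
    rw [this, Matrix.add_apply, Matrix.smul_apply, smul_eq_mul, Matrix.sum_apply]
    congr 1
    have hcongr : ∀ i ∈ Finset.range (d + 1),
        (E ^ i) j k = if i = (k : ℕ) - (j : ℕ) then 1 else 0 := by
      intro i _
      rw [hE, TaylorAux.Emat_pow]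
      exact if_congr (by omega) rfl rfl
    rw [Finset.sum_congr rfl hcongr, Finset.sum_ite_eq' (Finset.range (d + 1))]
    rw [if_pos (Finset.mem_range.mpr (by have := k.isLt; omega))]
  · have key : (Matrix.of fun j k : Fin (d + 1) =>
          if j = k then tsym
          else if j < k then LaurentPolynomial.C (s j k) else 0) * D
        = tsym • (D * (1 + N)) := by
      ext j k
      rw [Matrix.mul_diagonal, Matrix.smul_apply, Matrix.diagonal_mul, Matrix.of_apply,
        Matrix.add_apply, smul_eq_mul]
      rcases lt_trichotomy j k with h | h | h
      · have hne : j ≠ k := ne_of_lt h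
        have hjk : (j : ℕ) < (k : ℕ) := Fin.lt_def.mp h
        rw [if_neg hne, if_pos h, Matrix.one_apply_ne hne, hN]
        simp only [TaylorAux.Nmat, Matrix.of_apply, if_pos hjk, zero_add]
        have h3 : tsym ^ (k : ℕ) = tsym ^ (j : ℕ) * tsym * tsym ^ ((k : ℕ) - (j : ℕ) - 1) := by
          rw [mul_assoc, ← pow_succ', ← pow_add]
          congr 1
          omega
        rw [h3]
        ring
      · subst h
        have hNjj : N j j = 0 := by
          simp only [hN, TaylorAux.Nmat, Matrix.of_apply, lt_irrefl, if_false]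
        rw [if_pos rfl, Matrix.one_apply_eq, hNjj, add_zero, mul_one]
      · have hne : j ≠ k := (ne_of_lt h).symm
        have hkj : ¬ (j : ℕ) < (k : ℕ) := by
          have := Fin.lt_def.mp h; omega
        rw [if_neg hne, if_neg (not_lt_of_gt h), Matrix.one_apply_ne hne, hN]
        simp only [TaylorAux.Nmat, Matrix.of_apply, if_neg hkj, add_zero, zero_mul, mul_zero]
    have hnil : (-N) ^ (d + 1) = 0 := by
      rcases Nat.even_or_odd (d + 1) with hp | hp
      · rw [hp.neg_pow, hN, TaylorAux.Nmat_nilpotent]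
      · rw [hp.neg_pow, hN, TaylorAux.Nmat_nilpotent, neg_zero]
    have hinv : (1 + N) * P = 1 := by
      have hgeo := mul_geom_sum (-N) (d + 1)
      rw [hnil, zero_sub] at hgeo
      have hrw : -N - 1 = -(1 + N) := by abel
      rw [hrw, neg_mul] at hgeo
      exact neg_injective hgeo
    calc (Matrix.of fun j k : Fin (d + 1) =>
          if j = k then tsym
          else if j < k then LaurentPolynomial.C (s j k) else 0) * D * P
        = (tsym • (D * (1 + N))) * P := by rw [key]
      _ = tsym • (D * ((1 + N) * P)) := by rw [Matrix.smul_mul, Matrix.mul_assoc]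
      _ = tsym • D := by rw [hinv, mul_one]
end

section
/- The (d(d+1)/2)×(d(d+1)/2) block matrix H with block rows [I_d, −H_{d,d−2}, …, −H_{d,0}], [C_{d−1}, −I_{d−1}, H_{d−1,d−3}, …, H_{d−1,0}], …, [C_1, −1, H_{1,0}] — where C_j is the j×(j+1)-type bidiagonal matrix with first column zero, 2's on the shifted diagonal and constants on the next superdiagonal, and each H_{j,k} ∈ ℝ^{j×(k+1)} has nonzero entries only in its top-left (k+1)×(k+1) diagonal part — satisfies |det H| = 1. In particular, det H is independent of the parameters w_{j,k} appearing in the blocks H_{j,k} and C_j. -/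
/-- The block matrix `H` from the generic construction, with block rows/columns indexed by
`b = 0, …, d-1` of sizes `d - b` (so total size `d(d+1)/2`):
* block `(0,0)` is the identity `I_d`;
* block `(0,c)`, `c ≥ 1`, is `-H_{d, d-1-c}`;
* block `(b,b)`, `b ≥ 1`, is `-I_{d-b}`;
* block `(b,b-1)`, `b ≥ 1`, is `C_{d-b}` (first column zero, `2`'s on the shifted
  diagonal, constant `d-b` at position `(0,2)`);
* block `(b,c)`, `1 ≤ b < c`, is `H_{d-b, d-1-c}`;
* all other blocks vanish.
Here `H_{j,k} ∈ ℝ^{j×(k+1)}` is `-w_{j,k+1}` times the matrix with diagonal entries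
`j!/(k+1)!, …, (j-k)!/1!` in the top `k+1` rows and zeros elsewhere. -/
noncomputable def Hmat (d : ℕ) (w : ℕ → ℕ → ℝ) :
    Matrix ((b : Fin d) × Fin (d - (b : ℕ))) ((b : Fin d) × Fin (d - (b : ℕ))) ℝ :=
  fun p q =>
    let b := (p.1 : ℕ); let i := (p.2 : ℕ)
    let c := (q.1 : ℕ); let i' := (q.2 : ℕ)
    if b = 0 then
      if c = 0 then (if i = i' then 1 else 0)
      else
        (if i = i' ∧ i ≤ d - 1 - c then
          w d (d - c) * ((Nat.factorial (d - i) : ℝ) / (Nat.factorial (d - c - i) : ℝ))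
        else 0)
    else if c = b then (if i = i' then -1 else 0)
    else if c + 1 = b then
      (if i' = i + 1 then 2 else if i = 0 ∧ i' = 2 then ((d - b : ℕ) : ℝ) else 0)
    else if b < c then
      (if i = i' ∧ i ≤ d - 1 - c then
        -(w (d - b) (d - c)) *
          ((Nat.factorial (d - b - i) : ℝ) / (Nat.factorial (d - c - i) : ℝ))
      else 0)
    else 0

set_option maxHeartbeats 2000000 in
/-- The determinant of `H` has absolute value `1`, independently of the parameters `w`. -/
theorem abs_det_Hmat (d : ℕ) (w : ℕ → ℕ → ℝ) : |(Hmat d w).det| = 1 := by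
  classical
  set I := ((b : Fin d) × Fin (d - (b : ℕ)))
  -- key function into lex order
  let key : I → ℕ ×ₗ ℕ := fun p => toLex ((p.2 : ℕ) + (p.1 : ℕ), d - 1 - (p.1 : ℕ))
  have hinj : Function.Injective key := by
    rintro ⟨b, i⟩ ⟨c, i'⟩ h
    have hb := b.isLt; have hc := c.isLt
    have h1 : ((i : ℕ) + (b : ℕ), d - 1 - (b : ℕ)) = ((i' : ℕ) + (c : ℕ), d - 1 - (c : ℕ)) :=
      toLex.injective h
    have h2 : (i : ℕ) + (b : ℕ) = (i' : ℕ) + (c : ℕ) := congrArg Prod.fst h1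
    have h3 : d - 1 - (b : ℕ) = d - 1 - (c : ℕ) := congrArg Prod.snd h1
    have hbc : (b : ℕ) = (c : ℕ) := by omega
    have hbc' : b = c := Fin.ext hbc
    subst hbc'
    have : (i : ℕ) = (i' : ℕ) := by omega
    exact congrArg (Sigma.mk _) (Fin.ext this)
  letI lo : LinearOrder I := LinearOrder.lift' key hinj
  have htri : @Matrix.BlockTriangular I I ℝ lo.toLT _ (Hmat d w) id := by
    rintro ⟨⟨b, hbd⟩, ⟨i, hi⟩⟩ ⟨⟨c, hcd⟩, ⟨i', hi'⟩⟩ hlt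
    have hlt' : key ⟨⟨c, hcd⟩, ⟨i', hi'⟩⟩ < key ⟨⟨b, hbd⟩, ⟨i, hi⟩⟩ := hlt
    rw [Prod.Lex.lt_iff] at hlt'
    simp only [key, ofLex_toLex] at hlt'
    simp only [Hmat]
    split_ifs with h1 h2 h3 h4 h5 h6 h7 h8 h9 h10 <;>
      first
        | rfl
        | (exfalso; omega)
  have hdet : (Hmat d w).det = ∏ p : I, Hmat d w p p :=
    Matrix.det_of_upperTriangular (M := Hmat d w) htri
  rw [hdet, Finset.abs_prod]
  apply Finset.prod_eq_one
  rintro ⟨⟨b, hbd⟩, ⟨i, hi⟩⟩ -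
  simp only [Hmat]
  split_ifs <;> simp_all
end
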